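/- For positive integers n ≥ 2 and m ≥ 0, the complete homogeneous symmetric polynomial of degree m evaluated at all n-th roots of unity satisfies H_m(1, ζ_n, ζ_n^2, ..., ζ_n^{n−1}) = 1 if n divides m, and 0 otherwise. -/

import Mathlib

open Polynomial

/-- The complete homogeneous symmetric polynomial of degree `r`
evaluated at the entries of a list. -/
noncomputable def hsymmEval : List ℂ → ℕ → ℂ
  | _, 0 => 1
  | [], _ + 1 => 0
  | x :: xs, r + 1 => x * hsymmEval (x :: xs) r + hsymmEval xs (r + 1)
  termination_by l r => (r, l.length)

/-- The list of the `φ(m)` primitive `m`-th roots of unity. -/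
noncomputable def primRoots (m : ℕ) : List ℂ :=
  ((List.range m).filter (fun j => Nat.gcd (j + 1) m = 1)).map
    (fun j => Complex.exp (2 * (Real.pi : ℂ) * Complex.I * (j + 1 : ℕ) / (m : ℂ)))

/-- The list of the non-primitive `m`-th roots of unity. -/
noncomputable def nonPrimRoots (m : ℕ) : List ℂ :=
  ((List.range m).filter (fun j => 1 < Nat.gcd (j + 1) m)).map
    (fun j => Complex.exp (2 * (Real.pi : ℂ) * Complex.I * (j + 1 : ℕ) / (m : ℂ)))

lemma list_prod_range {M : Type*} [CommMonoid M] (f : ℕ → M) (k : ℕ) :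
    ((List.range k).map f).prod = ∏ i ∈ Finset.range k, f i := by
  induction k with
  | zero => simp
  | succ k ih =>
      rw [List.range_succ, List.map_append, List.prod_append, Finset.prod_range_succ, ih]
      simp

lemma hsymmEval_nil_succ (r : ℕ) : hsymmEval [] (r + 1) = 0 := by
  simp [hsymmEval]

lemma hsymmEval_zero (l : List ℂ) : hsymmEval l 0 = 1 := by
  cases l <;> simp [hsymmEval]

lemma hsymmEval_cons_succ (x : ℂ) (xs : List ℂ) (r : ℕ) :
    hsymmEval (x :: xs) (r + 1) = x * hsymmEval (x :: xs) r + hsymmEval xs (r + 1) := by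
  simp [hsymmEval]

lemma hsymmEval_mk (x : ℂ) (xs : List ℂ) :
    (1 - PowerSeries.C (R := ℂ) x * PowerSeries.X) * PowerSeries.mk (hsymmEval (x :: xs)) =
      PowerSeries.mk (hsymmEval xs) := by
  ext k
  rw [sub_mul, one_mul, map_sub, mul_assoc]
  cases k with
  | zero =>
      simp [hsymmEval_zero, PowerSeries.coeff_zero_eq_constantCoeff]
  | succ r =>
      rw [PowerSeries.coeff_C_mul, PowerSeries.coeff_succ_X_mul, PowerSeries.coeff_mk,
        PowerSeries.coeff_mk, PowerSeries.coeff_mk, hsymmEval_cons_succ]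
      ring

lemma hsymmEval_prod (l : List ℂ) :
    (l.map fun x => 1 - PowerSeries.C (R := ℂ) x * PowerSeries.X).prod *
      PowerSeries.mk (hsymmEval l) = 1 := by
  induction l with
  | nil =>
      simp only [List.map_nil, List.prod_nil, one_mul]
      ext k
      cases k with
      | zero => simp [hsymmEval_zero, PowerSeries.coeff_zero_eq_constantCoeff]
      | succ r => simp [hsymmEval_nil_succ, PowerSeries.coeff_one]
  | cons x xs ih =>
      rw [List.map_cons, List.prod_cons, mul_comm (1 - _), mul_assoc, hsymmEval_mk, ih]

lemma prod_one_sub_prim {n : ℕ} (hn : 0 < n) {ω : ℂ} (hω : IsPrimitiveRoot ω n) :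
    ∏ i ∈ Finset.range n, (1 - Polynomial.C (ω ^ i) * Polynomial.X) =
      1 - (Polynomial.X : ℂ[X]) ^ n := by
  have hpoly := X_pow_sub_C_eq_prod hω hn (one_pow n)
  have hinv := X_pow_sub_C_eq_prod hω.inv hn (one_pow n)
  have hω0 : ω ≠ 0 := hω.ne_zero hn.ne'
  -- product of (-ω^i) equals -1 : evaluate hpoly at 0
  have hprod : ∏ i ∈ Finset.range n, (-(ω ^ i)) = -1 := by
    have := congrArg (Polynomial.eval (0 : ℂ)) hpoly
    simpa [Polynomial.eval_prod, zero_pow hn.ne'] using this.symm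
  apply Polynomial.funext
  intro t
  have hroots : ∏ i ∈ Finset.range n, (t - (ω⁻¹) ^ i) = t ^ n - 1 := by
    have := congrArg (Polynomial.eval t) hinv
    simpa [Polynomial.eval_prod] using this.symm
  have hfactor : ∀ i, (1 : ℂ) - ω ^ i * t = (-(ω ^ i)) * (t - (ω⁻¹) ^ i) := by
    intro i
    have h1 : ω ^ i * (ω⁻¹) ^ i = 1 := by
      rw [← mul_pow, mul_inv_cancel₀ hω0, one_pow]
    ring_nf
    ring_nf at h1
    rw [h1]
    ring
  simp only [Polynomial.eval_prod, Polynomial.eval_sub, Polynomial.eval_one,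
    Polynomial.eval_mul, Polynomial.eval_C, Polynomial.eval_X, Polynomial.eval_pow]
  calc ∏ i ∈ Finset.range n, (1 - ω ^ i * t)
      = ∏ i ∈ Finset.range n, ((-(ω ^ i)) * (t - (ω⁻¹) ^ i)) := by
        exact Finset.prod_congr rfl fun i _ => hfactor i
    _ = (∏ i ∈ Finset.range n, (-(ω ^ i))) * ∏ i ∈ Finset.range n, (t - (ω⁻¹) ^ i) :=
        Finset.prod_mul_distrib
    _ = (-1) * (t ^ n - 1) := by rw [hprod, hroots]
    _ = 1 - t ^ n := by ring

theorem hsymm_all_roots_of_unity (n m : ℕ) (hn : 2 ≤ n) :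
    hsymmEval
        ((List.range n).map
          (fun j => Complex.exp (2 * (Real.pi : ℂ) * Complex.I * (j : ℕ) / (n : ℂ)))) m =
      if n ∣ m then 1 else 0 := by
  have hn0 : 0 < n := by omega
  set ω : ℂ := Complex.exp (2 * (Real.pi : ℂ) * Complex.I / n) with hωdef
  have hω : IsPrimitiveRoot ω n := Complex.isPrimitiveRoot_exp n hn0.ne'
  have hpow : ∀ j : ℕ, Complex.exp (2 * (Real.pi : ℂ) * Complex.I * (j : ℕ) / (n : ℂ)) = ω ^ j := by
    intro j
    rw [hωdef, ← Complex.exp_nat_mul]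
    ring_nf
  set L : List ℂ :=
    (List.range n).map
      (fun j => Complex.exp (2 * (Real.pi : ℂ) * Complex.I * (j : ℕ) / (n : ℂ))) with hL
  -- the generating-function identity specialized to L
  have hgen : (1 - PowerSeries.X ^ n) * PowerSeries.mk (hsymmEval L) = 1 := by
    have h1 := hsymmEval_prod L
    have hlist : (L.map fun x => 1 - PowerSeries.C (R := ℂ) x * PowerSeries.X).prod =
        ∏ i ∈ Finset.range n, (1 - PowerSeries.C (R := ℂ) (ω ^ i) * PowerSeries.X) := by
      rw [hL, List.map_map, list_prod_range]
      exact Finset.prod_congr rfl fun i _ => by simp [Function.comp, hpow i]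
    have hcoe : ∏ i ∈ Finset.range n, (1 - PowerSeries.C (R := ℂ) (ω ^ i) * PowerSeries.X) =
        1 - PowerSeries.X ^ n := by
      have := congrArg (Polynomial.coeToPowerSeries.ringHom (R := ℂ)) (prod_one_sub_prim hn0 hω)
      rw [map_prod] at this
      simpa only [map_sub, map_one, map_mul, map_pow, Polynomial.coeToPowerSeries.ringHom_apply,
        Polynomial.coe_C, Polynomial.coe_X] using this
    rw [hlist, hcoe] at h1
    exact h1
  -- extract the coefficient recurrence
  have hrec : ∀ k : ℕ, hsymmEval L k =
      (if k = 0 then (1 : ℂ) else 0) + (if n ≤ k then hsymmEval L (k - n) else 0) := by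
    intro k
    have := congrArg (PowerSeries.coeff (R := ℂ) k) hgen
    rw [sub_mul, one_mul, map_sub, PowerSeries.coeff_X_pow_mul'] at this
    simp only [PowerSeries.coeff_mk, PowerSeries.coeff_one] at this
    split_ifs at this with h1 h2 h2 <;> split_ifs <;> linear_combination this
  -- strong induction
  induction m using Nat.strong_induction_on with
  | _ m ih =>
    rcases lt_or_ge m n with hm | hm
    · rcases Nat.eq_zero_or_pos m with rfl | hm0
      · simp [hsymmEval_zero]
      · have : ¬ n ∣ m := Nat.not_dvd_of_pos_of_lt hm0 hm
        rw [hrec m, if_neg (by omega), if_neg (by omega), if_neg this]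
        ring
    · have hne : m ≠ 0 := by omega
      have hdvd : n ∣ m ↔ n ∣ m - n := by
        constructor
        · intro h; exact (Nat.dvd_sub h dvd_rfl)
        · intro h
          have : m = (m - n) + n := by omega
          rw [this]; exact Nat.dvd_add h dvd_rfl
      rw [hrec m, if_neg hne, if_pos hm, ih (m - n) (by omega), zero_add]
      by_cases h : n ∣ m
      · rw [if_pos h, if_pos (hdvd.mp h)]
      · rw [if_neg h, if_neg (fun hc => h (hdvd.mpr hc))]
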